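/- Let f : ℝ → ℝ be continuously differentiable on [a,b] with midpoint x⁰, symmetric partition points x^{−k}=a ≤ ⋯ ≤ x⁰ ≤ ⋯ ≤ x^k=b with dx^i = x^i − x^{i−1}, and for each i let ∇̄^i satisfy |f′(ξ)| ≤ ∇̄^i for all ξ ∈ [x^{−i}, x^i]. Then {f(x) : x ∈ [a,b]} ⊆ [f(x⁰) − Σ_{i=1}^k ∇̄^i dx^i, f(x⁰) + Σ_{i=1}^k ∇̄^i dx^i]. -/

import Mathlib

private lemma key_mvt (f : ℝ → ℝ) (a b : ℝ) (hf : ContDiffOn ℝ 1 f (Set.Icc a b))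
    (c d C : ℝ) (hac : a ≤ c) (hcd : c ≤ d) (hdb : d ≤ b)
    (hC : ∀ ξ ∈ Set.Ioo c d, |deriv f ξ| ≤ C) :
    |f d - f c| ≤ C * (d - c) := by
  rcases eq_or_lt_of_le hcd with h | h
  · subst h; simp
  · obtain ⟨ξ, hξ, hslope⟩ := exists_deriv_eq_slope f h
      (hf.continuousOn.mono (Set.Icc_subset_Icc hac hdb))
      (fun x hx => (((hf.differentiableOn one_ne_zero).mono
        (Set.Icc_subset_Icc hac hdb) x (Set.mem_Icc_of_Ioo hx)).differentiableAt
        (Icc_mem_nhds hx.1 hx.2)).differentiableWithinAt)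
    have h1 : f d - f c = deriv f ξ * (d - c) := by
      rw [eq_div_iff (by linarith : d - c ≠ 0)] at hslope
      linarith
    rw [h1, abs_mul, abs_of_nonneg (by linarith : (0:ℝ) ≤ d - c)]
    exact mul_le_mul_of_nonneg_right (hC ξ hξ) (by linarith)

/-- One-dimensional quadrature-refined over-approximation (Equation (7), Section 4.2):
with a symmetric partition about the midpoint and upper bounds `G i` of `|f'|` on each
nested interval `[x^{−i}, x^i]`, the range of `f` over `[a,b]` is contained in
`[f(x⁰) − Σ G i · dxⁱ, f(x⁰) + Σ G i · dxⁱ]`. -/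
theorem quadrature_over_approx (f : ℝ → ℝ) (a b : ℝ) (hab : a ≤ b)
    (hf : ContDiffOn ℝ 1 f (Set.Icc a b))
    (k : ℕ) (xp : ℕ → ℝ)
    (hlo : xp 0 = a) (hhi : xp (2 * k) = b)
    (hmono : ∀ i < 2 * k, xp i ≤ xp (i + 1))
    (hmid : xp k = (a + b) / 2)
    (hsym : ∀ i ≤ k, xp (k + i) - xp k = xp k - xp (k - i))
    (G : ℕ → ℝ)
    (hG : ∀ i, 1 ≤ i → i ≤ k →
      ∀ ξ ∈ Set.Icc (xp (k - i)) (xp (k + i)), |deriv f ξ| ≤ G i) :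
    f '' Set.Icc a b ⊆
      Set.Icc
        (f (xp k) - ∑ i ∈ Finset.Icc 1 k, G i * (xp (k + i) - xp (k + i - 1)))
        (f (xp k) + ∑ i ∈ Finset.Icc 1 k, G i * (xp (k + i) - xp (k + i - 1))) := by
  -- monotonicity of xp up to 2k
  have mono : ∀ m n, m ≤ n → n ≤ 2 * k → xp m ≤ xp n := by
    intro m n hmn hn
    induction n with
    | zero =>
      have : m = 0 := by omega
      rw [this]
    | succ n ih =>
      rcases eq_or_lt_of_le hmn with h | h
      · rw [h]
      · exact le_trans (ih (by omega) (by omega)) (hmono n (by omega))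
  have habd : ∀ n ≤ 2 * k, a ≤ xp n ∧ xp n ≤ b := by
    intro n hn
    constructor
    · rw [← hlo]; exact mono 0 n (by omega) hn
    · rw [← hhi]; exact mono n (2 * k) hn le_rfl
  have hGnn : ∀ i, 1 ≤ i → i ≤ k → 0 ≤ G i := by
    intro i h1 h2
    have := hG i h1 h2 (xp k) ⟨mono (k - i) k (by omega) (by omega),
      mono k (k + i) (by omega) (by omega)⟩
    exact le_trans (abs_nonneg _) this
  -- ring width equality
  have dxeq : ∀ j, j + 1 ≤ k →
      xp (k + (j + 1)) - xp (k + j) = xp (k - j) - xp (k - (j + 1)) := by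
    intro j hj
    have h1 := hsym (j + 1) hj
    have h2 := hsym j (by omega)
    linarith
  -- key claim by induction
  have claim : ∀ j, j ≤ k → ∀ x ∈ Set.Icc (xp (k - j)) (xp (k + j)),
      |f x - f (xp k)| ≤ ∑ i ∈ Finset.Icc 1 j, G i * (xp (k + i) - xp (k + i - 1)) := by
    intro j
    induction j with
    | zero =>
      intro _ x hx
      simp only [Nat.sub_zero, Nat.add_zero] at hx
      have : x = xp k := le_antisymm hx.2 hx.1
      simp [this]
    | succ j ih =>
      intro hj x hx
      have hjk : j ≤ k := by omega
      have hsum : ∑ i ∈ Finset.Icc 1 (j + 1), G i * (xp (k + i) - xp (k + i - 1)) =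
          (∑ i ∈ Finset.Icc 1 j, G i * (xp (k + i) - xp (k + i - 1)))
            + G (j + 1) * (xp (k + (j + 1)) - xp (k + (j + 1) - 1)) := by
        rw [← Finset.sum_Icc_succ_top (by omega)]
      have hidx : k + (j + 1) - 1 = k + j := by omega
      have hdx_nn : 0 ≤ xp (k + (j + 1)) - xp (k + j) := by
        have := mono (k + j) (k + (j + 1)) (by omega) (by omega)
        linarith
      have hGj := hGnn (j + 1) (by omega) hj
      rcases le_or_gt x (xp (k - j)) with hL | hL
      · -- x in left outer ring
        have h1 : |f (xp (k - j)) - f x| ≤ G (j + 1) * (xp (k - j) - x) := by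
          apply key_mvt f a b hf x (xp (k - j)) (G (j + 1))
            ((habd (k - (j + 1)) (by omega)).1.trans hx.1) hL
            (habd (k - j) (by omega)).2
          intro ξ hξ
          exact hG (j + 1) (by omega) hj ξ
            ⟨hx.1.trans (le_of_lt hξ.1),
             (le_of_lt hξ.2).trans (mono (k - j) (k + (j + 1)) (by omega) (by omega))⟩
        have h2 := ih hjk (xp (k - j)) ⟨le_rfl, mono (k - j) (k + j) (by omega) (by omega)⟩
        have h3 : xp (k - j) - x ≤ xp (k + (j + 1)) - xp (k + j) := by
          rw [dxeq j hj]; linarith [hx.1]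
        have := abs_sub_abs_le_abs_sub (f x - f (xp k)) (f x - f (xp (k - j)))
        rw [hsum, hidx]
        calc |f x - f (xp k)| ≤ |f (xp (k - j)) - f x| + |f (xp (k - j)) - f (xp k)| := by
              rw [abs_sub_comm (f (xp (k - j))) (f x)]
              exact abs_sub_le _ _ _
          _ ≤ G (j + 1) * (xp (k - j) - x) + ∑ i ∈ Finset.Icc 1 j, G i * (xp (k + i) - xp (k + i - 1)) := by
              exact add_le_add h1 h2
          _ ≤ _ := by
              have := mul_le_mul_of_nonneg_left h3 hGj
              linarith
      · rcases le_or_gt x (xp (k + j)) with hR | hR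
        · -- x in inner interval
          have h2 := ih hjk x ⟨le_of_lt hL, hR⟩
          rw [hsum, hidx]
          nlinarith
        · -- x in right outer ring
          have h1 : |f x - f (xp (k + j))| ≤ G (j + 1) * (x - xp (k + j)) := by
            apply key_mvt f a b hf (xp (k + j)) x (G (j + 1))
              (habd (k + j) (by omega)).1 (le_of_lt hR)
              (hx.2.trans (habd (k + (j + 1)) (by omega)).2)
            intro ξ hξ
            exact hG (j + 1) (by omega) hj ξ
              ⟨(mono (k - (j + 1)) (k + j) (by omega) (by omega)).trans (le_of_lt hξ.1),
               (le_of_lt hξ.2).trans hx.2⟩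
          have h2 := ih hjk (xp (k + j)) ⟨mono (k - j) (k + j) (by omega) (by omega), le_rfl⟩
          have h3 : x - xp (k + j) ≤ xp (k + (j + 1)) - xp (k + j) := by linarith [hx.2]
          rw [hsum, hidx]
          calc |f x - f (xp k)| ≤ |f x - f (xp (k + j))| + |f (xp (k + j)) - f (xp k)| := by
                have := abs_sub_le (f x) (f (xp (k + j))) (f (xp k)); linarith
            _ ≤ G (j + 1) * (x - xp (k + j)) + ∑ i ∈ Finset.Icc 1 j, G i * (xp (k + i) - xp (k + i - 1)) :=
                add_le_add h1 h2
            _ ≤ _ := by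
                have := mul_le_mul_of_nonneg_left h3 hGj
                linarith
  rintro y ⟨x, hx, rfl⟩
  have hx' : x ∈ Set.Icc (xp (k - k)) (xp (k + k)) := by
    have : k - k = 0 := by omega
    rw [this, hlo]
    have : k + k = 2 * k := by omega
    rw [this, hhi]
    exact hx
  have := claim k le_rfl x hx'
  rw [abs_le] at this
  constructor <;> linarith [this.1, this.2]
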